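/- The pair (C_1, C_2) of Latin squares of order 3 on ZMod 3 is orthogonal, and every ordered pair of orthogonal Latin squares of order 3 is ∼'-equivalent to (C_1, C_2); hence the set of ∼'-equivalence classes of ordered pairs of orthogonal Latin squares of order 3 has exactly one element. -/

import Mathlib

/-- A Latin square of order `k` (rows, columns and symbols drawn from the same
`k`-element type, e.g. `Fin k` or `ZMod k`): every row and every column is a
bijection. -/
def IsLatinSquare {α : Type*} (L : α → α → α) : Prop :=
  (∀ i, Function.Bijective fun j => L i j) ∧ (∀ j, Function.Bijective fun i => L i j)

/-- Two squares are orthogonal if `(i, j) ↦ (L i j, L' i j)` is a bijection. -/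
def IsOrthogonal {α : Type*} (L L' : α → α → α) : Prop :=
  Function.Bijective fun p : α × α => (L p.1 p.2, L' p.1 p.2)

/-- The relation `∼` on Latin squares: `L ∼ L'` iff `L'` is obtained from `L` by
permuting rows, permuting columns and relabelling symbols. -/
def LatinEquiv {α : Type*} (L L' : α → α → α) : Prop :=
  ∃ a b c : Equiv.Perm α, ∀ i j, L' i j = c (L (a i) (b j))

/-- One elementary move on an ordered pair of squares: simultaneous row
permutation, simultaneous column permutation, relabelling the symbols of either
square, transposing either square, or interchanging the squares. -/
inductive PairStep {α : Type*} :
    ((α → α → α) × (α → α → α)) → ((α → α → α) × (α → α → α)) → Prop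
  | rows (P : (α → α → α) × (α → α → α)) (a : Equiv.Perm α) :
      PairStep P (fun i j => P.1 (a i) j, fun i j => P.2 (a i) j)
  | cols (P : (α → α → α) × (α → α → α)) (b : Equiv.Perm α) :
      PairStep P (fun i j => P.1 i (b j), fun i j => P.2 i (b j))
  | relabelFst (P : (α → α → α) × (α → α → α)) (c : Equiv.Perm α) :
      PairStep P (fun i j => c (P.1 i j), P.2)
  | relabelSnd (P : (α → α → α) × (α → α → α)) (c : Equiv.Perm α) :
      PairStep P (P.1, fun i j => c (P.2 i j))
  | transposeFst (P : (α → α → α) × (α → α → α)) :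
      PairStep P (fun i j => P.1 j i, P.2)
  | transposeSnd (P : (α → α → α) × (α → α → α)) :
      PairStep P (P.1, fun i j => P.2 j i)
  | swap (P : (α → α → α) × (α → α → α)) :
      PairStep P (P.2, P.1)

/-- The equivalence relation `∼'` on ordered pairs of squares, generated by the
elementary moves `PairStep`. -/
def PairEquiv {α : Type*} (P Q : (α → α → α) × (α → α → α)) : Prop :=
  Relation.EqvGen PairStep P Q

/-- The cyclic square `C_c` on `ZMod k`: `C_c i j = j + c * i`. -/
def Csq (k : ℕ) (c : ZMod k) : ZMod k → ZMod k → ZMod k :=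
  fun i j => j + c * i

/-- Ordered pairs of orthogonal Latin squares of order `k`. -/
def OLSPair (k : ℕ) :=
  {P : (Fin k → Fin k → Fin k) × (Fin k → Fin k → Fin k) //
    IsLatinSquare P.1 ∧ IsLatinSquare P.2 ∧ IsOrthogonal P.1 P.2}

/-- `∼'` as a setoid on ordered pairs of orthogonal Latin squares. -/
def olsSetoid (k : ℕ) : Setoid (OLSPair k) where
  r P Q := PairEquiv P.val Q.val
  iseqv := ⟨fun _ => Relation.EqvGen.refl _,
            fun h => Relation.EqvGen.symm _ _ h,
            fun h h' => Relation.EqvGen.trans _ _ _ h h'⟩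

/-- A transversal of a square: a permutation `f` of the columns such that
`i ↦ L i (f i)` is injective (hits every symbol exactly once). -/
def IsTransversal {α : Type*} (L : α → α → α) (f : Equiv.Perm α) : Prop :=
  Function.Injective fun i => L i (f i)

/-- `L` admits `k` pairwise disjoint transversals. -/
def HasDisjointTransversals {k : ℕ} (L : Fin k → Fin k → Fin k) : Prop :=
  ∃ T : Fin k → Equiv.Perm (Fin k), (∀ m, IsTransversal L (T m)) ∧
    ∀ m m', m ≠ m' → ∀ i, T m i ≠ T m' i

/-- `G'_k`: Latin squares whose successive-row permutations `σ_{i,i+1}` all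
equal one common permutation which is a single `k`-cycle. -/
def GPrime (k : ℕ) : Set (Fin k → Fin k → Fin k) :=
  {L | IsLatinSquare L ∧ ∃ σ : Equiv.Perm (Fin k), σ.IsCycle ∧ σ.support.card = k ∧
    ∀ (i : ℕ) (h : i + 1 < k) (p : Fin k),
      σ (L ⟨i, Nat.lt_of_succ_lt h⟩ p) = L ⟨i + 1, h⟩ p}

/-- `G_k`: Latin squares `∼`-equivalent to an element of `G'_k`. -/
def GSet (k : ℕ) : Set (Fin k → Fin k → Fin k) :=
  {L | ∃ H ∈ GPrime k, LatinEquiv L H}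

/-- The cyclic square `C_1`, written on `Fin k` via the identification of
`ZMod k` with `Fin k`: `C_1 i j = j + i (mod k)`. -/
def C1fin (k : ℕ) : Fin k → Fin k → Fin k :=
  fun i j => ⟨(j.1 + i.1) % k, Nat.mod_lt _ i.pos⟩

set_option maxRecDepth 4000

lemma key'aux : ∀ r1 r2 : Fin 3 → Fin 3, IsLatinSquare ![fun j => j, r1, r2] →
    ![fun j => j, r1, r2] = Csq 3 1 ∨ ![fun j => j, r1, r2] = Csq 3 2 := by
  let i1 : ∀ r1 r2 : Fin 3 → Fin 3, Decidable (![fun j => j, r1, r2] = Csq 3 1) := fun _ _ => Fintype.decidablePiFintype _ _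
  let i2 : ∀ r1 r2 : Fin 3 → Fin 3, Decidable (![fun j => j, r1, r2] = Csq 3 2) := fun _ _ => Fintype.decidablePiFintype _ _
  unfold IsLatinSquare; decide

lemma key_aux (M : Fin 3 → Fin 3 → Fin 3) (h0 : ∀ j, M 0 j = j) (h : IsLatinSquare M) :
    M = Csq 3 1 ∨ M = Csq 3 2 := by
  have hM : M = ![fun j => j, M 1, M 2] := by
    funext i j
    fin_cases i <;> simp [h0]
  rw [hM] at h ⊢
  exact key'aux _ _ h

lemma orth12_aux : IsOrthogonal (Csq 3 1) (Csq 3 2) := by unfold IsOrthogonal Csq; decide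
lemma northAA_aux : ¬ IsOrthogonal (Csq 3 1) (Csq 3 1) := by unfold IsOrthogonal Csq; decide
lemma northBB_aux : ¬ IsOrthogonal (Csq 3 2) (Csq 3 2) := by unfold IsOrthogonal Csq; decide
lemma latin1_aux : IsLatinSquare (Csq 3 1) := by unfold IsLatinSquare Csq; decide
lemma latin2_aux : IsLatinSquare (Csq 3 2) := by unfold IsLatinSquare Csq; decide

lemma main_aux (L L' : Fin 3 → Fin 3 → Fin 3)
    (hL : IsLatinSquare L) (hL' : IsLatinSquare L') (hO : IsOrthogonal L L') :
    PairEquiv (L, L') (Csq 3 1, Csq 3 2) := by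
  set e : Fin 3 ≃ Fin 3 := Equiv.ofBijective (fun j => L 0 j) (hL.1 0) with he
  set b : Equiv.Perm (Fin 3) := e.symm with hb
  set M : Fin 3 → Fin 3 → Fin 3 := fun i j => L i (b j) with hMdef
  set N : Fin 3 → Fin 3 → Fin 3 := fun i j => L' i (b j) with hNdef
  have hN0 : Function.Bijective (fun j => N 0 j) :=
    Function.Bijective.comp (hL'.1 0) b.bijective
  set e' : Fin 3 ≃ Fin 3 := Equiv.ofBijective (fun j => N 0 j) hN0 with he'
  set c : Equiv.Perm (Fin 3) := e'.symm with hc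
  set M' : Fin 3 → Fin 3 → Fin 3 := fun i j => c (N i j) with hM'def
  have hM0 : ∀ j, M 0 j = j := fun j => e.apply_symm_apply j
  have hM'0 : ∀ j, M' 0 j = j := fun j => e'.symm_apply_apply j
  have hMlat : IsLatinSquare M :=
    ⟨fun i => Function.Bijective.comp (hL.1 i) b.bijective, fun j => hL.2 (b j)⟩
  have hM'lat : IsLatinSquare M' :=
    ⟨fun i => c.bijective.comp (Function.Bijective.comp (hL'.1 i) b.bijective),
     fun j => c.bijective.comp (hL'.2 (b j))⟩
  have hOrth : IsOrthogonal M M' :=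
    ((Equiv.prodCongr (Equiv.refl (Fin 3)) c).bijective.comp
      (hO.comp (Equiv.prodCongr (Equiv.refl (Fin 3)) b).bijective))
  have s1 : PairStep (L, L') (M, N) := PairStep.cols (L, L') b
  have s2 : PairStep (M, N) (M, M') := PairStep.relabelSnd (M, N) c
  have base : PairEquiv (L, L') (M, M') :=
    Relation.EqvGen.trans _ _ _ (Relation.EqvGen.rel _ _ s1) (Relation.EqvGen.rel _ _ s2)
  rcases key_aux M hM0 hMlat with h1 | h1 <;> rcases key_aux M' hM'0 hM'lat with h2 | h2
  · rw [h1, h2] at hOrth; exact absurd hOrth northAA_aux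
  · rw [h1, h2] at base; exact base
  · have s3 : PairStep (M, M') (M', M) := PairStep.swap (M, M')
    have base2 : PairEquiv (L, L') (M', M) :=
      Relation.EqvGen.trans _ _ _ base (Relation.EqvGen.rel _ _ s3)
    rw [h1, h2] at base2; exact base2
  · rw [h1, h2] at hOrth; exact absurd hOrth northBB_aux

/-- The pair `(C₁, C₂)` of order-3 cyclic squares is orthogonal, every ordered
pair of orthogonal Latin squares of order 3 is `∼'`-equivalent to it, and hence
there is exactly one `∼'`-equivalence class of ordered pairs of orthogonal
Latin squares of order 3. (`ZMod 3` is identified with `Fin 3`.) -/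

theorem ols3_classes :
    IsOrthogonal (Csq 3 1) (Csq 3 2) ∧
    (∀ L L' : Fin 3 → Fin 3 → Fin 3,
      IsLatinSquare L → IsLatinSquare L' → IsOrthogonal L L' →
        PairEquiv (L, L') (Csq 3 1, Csq 3 2)) ∧
    Nat.card (Quotient (olsSetoid 3)) = 1 := by
  refine ⟨orth12_aux, fun L L' hL hL' hO => main_aux L L' hL hL' hO, ?_⟩
  have hcan : OLSPair 3 := ⟨(Csq 3 1, Csq 3 2), latin1_aux, latin2_aux, orth12_aux⟩
  rw [Nat.card_eq_one_iff_unique]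
  constructor
  · constructor
    intro a b
    refine Quotient.inductionOn₂ a b (fun P Q => Quotient.sound ?_)
    exact Relation.EqvGen.trans _ _ _
      (main_aux P.val.1 P.val.2 P.prop.1 P.prop.2.1 P.prop.2.2)
      (Relation.EqvGen.symm _ _
        (main_aux Q.val.1 Q.val.2 Q.prop.1 Q.prop.2.1 Q.prop.2.2))
  · exact ⟨Quotient.mk _ hcan⟩
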